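/- The function K defined by K(x) = (√π/2) · (e^{−x²}/x) · erfi(x) maps the interval (0, ∞) bijectively onto the interval (0, 1); in particular its inverse K⁻¹ : (0, 1) → (0, ∞) is well defined. -/

import Mathlib

open Real

/-- The imaginary error function `erfi x = (2/√π) ∫₀ˣ e^{t²} dt`. -/
noncomputable def erfi (x : ℝ) : ℝ :=
  (2 / Real.sqrt π) * ∫ t in (0:ℝ)..x, Real.exp (t ^ 2)

/-- `K x = (√π/2) · (e^{−x²}/x) · erfi x`. -/
noncomputable def K (x : ℝ) : ℝ :=
  (Real.sqrt π / 2) * (Real.exp (-x ^ 2) / x) * erfi x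


noncomputable def F (x : ℝ) : ℝ := ∫ t in (0:ℝ)..x, Real.exp (t ^ 2)
lemma contExp : Continuous fun t : ℝ => Real.exp (t ^ 2) :=
  Real.continuous_exp.comp (continuous_pow 2)
lemma hF (x : ℝ) : HasDerivAt F (Real.exp (x ^ 2)) x :=
  intervalIntegral.integral_hasDerivAt_right (contExp.intervalIntegrable _ _)
    (contExp.aestronglyMeasurable.stronglyMeasurableAtFilter) contExp.continuousAt
lemma contF : Continuous F := by
  have : Differentiable ℝ F := fun x => (hF x).differentiableAt
  exact this.continuous
lemma F_pos {x : ℝ} (hx : 0 < x) : 0 < F x :=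
  intervalIntegral.intervalIntegral_pos_of_pos (contExp.intervalIntegrable _ _)
    (fun t => Real.exp_pos _) hx
lemma F_zero : F 0 = 0 := intervalIntegral.integral_same

lemma hexp (x : ℝ) : HasDerivAt (fun x : ℝ => Real.exp (x ^ 2)) (Real.exp (x ^ 2) * (2 * x)) x := by
  have := (hasDerivAt_pow 2 x).exp
  simpa using this

lemma hG (x : ℝ) : HasDerivAt (fun x => x * Real.exp (x ^ 2) - F x) (2 * x ^ 2 * Real.exp (x ^ 2)) x := by
  have h := ((hasDerivAt_id x).mul (hexp x)).sub (hF x)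
  refine h.congr_deriv ?_; simp only [id_eq]; ring

lemma F_lt {x : ℝ} (hx : 0 < x) : F x < x * Real.exp (x ^ 2) := by
  have mono : StrictMonoOn (fun x => x * Real.exp (x ^ 2) - F x) (Set.Ici 0) := by
    apply strictMonoOn_of_deriv_pos (convex_Ici 0)
    · exact ((continuous_id.mul contExp).sub contF).continuousOn
    · intro z hz
      rw [interior_Ici] at hz
      rw [(hG z).deriv]
      have hz' : (0:ℝ) < z := hz
      positivity
  have := mono (le_refl (0:ℝ)) (le_of_lt hx) hx
  simp [F_zero] at this
  linarith

lemma hH (x : ℝ) : HasDerivAt (fun x => x * Real.exp (x ^ 2) - (1 + 2 * x ^ 2) * F x) (-(4 * x * F x)) x := by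
  have h2 : HasDerivAt (fun x : ℝ => 1 + 2 * x ^ 2) (4 * x) x := by
    have := (hasDerivAt_pow 2 x).const_mul 2 |>.const_add 1
    simpa using this.congr_deriv (by ring)
  have h := ((hasDerivAt_id x).mul (hexp x)).sub (h2.mul (hF x))
  refine h.congr_deriv ?_; simp only [id_eq]; ring

lemma H_lt {x : ℝ} (hx : 0 < x) : x * Real.exp (x ^ 2) < (1 + 2 * x ^ 2) * F x := by
  have anti : StrictAntiOn (fun x => x * Real.exp (x ^ 2) - (1 + 2 * x ^ 2) * F x) (Set.Ici 0) := by
    apply strictAntiOn_of_deriv_neg (convex_Ici 0)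
    · exact ((continuous_id.mul contExp).sub ((continuous_const.add (continuous_const.mul (continuous_pow 2))).mul contF)).continuousOn
    · intro z hz
      rw [interior_Ici] at hz
      rw [(hH z).deriv]
      have := F_pos hz
      nlinarith [mul_pos (Set.mem_Ioi.mp hz) this]
  have := anti (le_refl (0:ℝ)) (le_of_lt hx) hx
  simp [F_zero] at this
  linarith

lemma K_eq (x : ℝ) : K x = Real.exp (-x ^ 2) * F x / x := by
  have h : Real.sqrt π ≠ 0 := by positivity
  unfold K erfi F
  set I := ∫ t in (0:ℝ)..x, Real.exp (t ^ 2)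
  field_simp

-- integral of exp (x*t)
lemma int_exp_mul {x : ℝ} (hx : 0 < x) :
    (∫ t in (0:ℝ)..x, Real.exp (x * t)) = (Real.exp (x ^ 2) - 1) / x := by
  have hd : ∀ t ∈ Set.uIcc (0:ℝ) x, HasDerivAt (fun t => Real.exp (x * t) / x) (Real.exp (x * t)) t := by
    intro t _
    have h1 : HasDerivAt (fun t : ℝ => x * t) x t := by
      simpa using (hasDerivAt_id t).const_mul x
    have := (h1.exp).div_const x
    refine this.congr_deriv ?_
    exact mul_div_cancel_right₀ _ hx.ne'
  rw [intervalIntegral.integral_eq_sub_of_hasDerivAt hd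
    ((Real.continuous_exp.comp (continuous_const.mul continuous_id)).intervalIntegrable _ _)]
  rw [mul_zero, mul_comm x x, ← pow_two, Real.exp_zero]
  ring

lemma F_le {x : ℝ} (hx : 0 < x) : F x ≤ (Real.exp (x ^ 2) - 1) / x := by
  rw [← int_exp_mul hx]
  apply intervalIntegral.integral_mono_on hx.le
    ((Real.continuous_exp.comp (continuous_pow 2)).intervalIntegrable _ _)
    ((Real.continuous_exp.comp (continuous_const.mul continuous_id)).intervalIntegrable _ _)
  intro t ht
  rcases ht with ⟨h0, h1⟩
  apply Real.exp_le_exp.mpr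
  simp only [id_eq, Pi.mul_apply]
  nlinarith

lemma exp_cancel (x : ℝ) : Real.exp (-x ^ 2) * Real.exp (x ^ 2) = 1 := by
  rw [← Real.exp_add]; simp

lemma K_pos {x : ℝ} (hx : 0 < x) : 0 < K x := by
  rw [K_eq]; exact div_pos (mul_pos (Real.exp_pos _) (F_pos hx)) hx

lemma K_lt_one {x : ℝ} (hx : 0 < x) : K x < 1 := by
  rw [K_eq, div_lt_one hx]
  nlinarith [mul_lt_mul_of_pos_left (F_lt hx) (Real.exp_pos (-x ^ 2)), exp_cancel x]

lemma K_gt {x : ℝ} (hx : 0 < x) : 1 / (1 + 2 * x ^ 2) < K x := by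
  rw [K_eq, div_lt_div_iff₀ (by positivity) hx]
  nlinarith [mul_lt_mul_of_pos_left (H_lt hx) (Real.exp_pos (-x ^ 2)), exp_cancel x]

lemma K_lt_inv_sq {x : ℝ} (hx : 0 < x) : K x < 1 / x ^ 2 := by
  rw [K_eq, div_lt_div_iff₀ hx (by positivity)]
  have h1 : F x * x ≤ Real.exp (x ^ 2) - 1 := by
    have := F_le hx; rwa [le_div_iff₀ hx] at this
  have h2 : Real.exp (-x ^ 2) * (Real.exp (x ^ 2) - 1) = 1 - Real.exp (-x ^ 2) := by
    rw [mul_sub, exp_cancel]; ring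
  nlinarith [mul_le_mul_of_nonneg_left h1 (Real.exp_pos (-x ^ 2)).le,
    Real.exp_pos (-x ^ 2), mul_pos hx (Real.exp_pos (-x ^ 2))]

lemma contK : ContinuousOn K (Set.Ioi 0) := by
  rw [funext K_eq]
  exact ((Real.continuous_exp.comp (continuous_pow 2).neg).mul contF).continuousOn.div
    continuousOn_id (fun x hx => ne_of_gt hx)

lemma K_anti : StrictAntiOn K (Set.Ioi 0) := by
  apply strictAntiOn_of_deriv_neg (convex_Ioi 0) contK
  intro z hz
  rw [interior_Ioi] at hz
  have hz' : (0:ℝ) < z := hz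
  have h1 : HasDerivAt (fun x : ℝ => Real.exp (-x ^ 2)) (Real.exp (-z ^ 2) * (-(2 * z))) z := by
    have := ((hasDerivAt_pow 2 z).neg).exp
    simpa using this
  have hu : HasDerivAt (fun x => Real.exp (-x ^ 2) * F x)
      (-2 * z * Real.exp (-z ^ 2) * F z + 1) z := by
    have h := h1.mul (hF z)
    refine h.congr_deriv ?_
    linear_combination exp_cancel z
  have hK : HasDerivAt K
      (((-2 * z * Real.exp (-z ^ 2) * F z + 1) * z - Real.exp (-z ^ 2) * F z * 1) / z ^ 2) z := by
    rw [funext K_eq]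
    have := hu.div (hasDerivAt_id z) (ne_of_gt hz')
    exact this
  rw [hK.deriv]
  apply div_neg_of_neg_of_pos _ (by positivity)
  nlinarith [mul_lt_mul_of_pos_left (H_lt hz') (Real.exp_pos (-z ^ 2)), exp_cancel z]

/-- `K` maps `(0, ∞)` bijectively onto `(0, 1)`. -/
theorem K_bijOn : Set.BijOn K (Set.Ioi (0 : ℝ)) (Set.Ioo (0 : ℝ) 1) := by
  refine ⟨fun x hx => ⟨K_pos hx, K_lt_one hx⟩, K_anti.injOn, ?_⟩
  intro y hy
  obtain ⟨hy0, hy1⟩ := hy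
  have hinv : 1 < 1 / y := (one_lt_div hy0).mpr hy1
  obtain ⟨a, ha_def⟩ : ∃ a, a = Real.sqrt ((1 / y - 1) / 4) := ⟨_, rfl⟩
  have ha : 0 < a := ha_def ▸ Real.sqrt_pos.mpr (by linarith)
  have ha2 : a ^ 2 = (1 / y - 1) / 4 := ha_def ▸ Real.sq_sqrt (by linarith)
  have hya : y * (1 / y) = 1 := mul_one_div_cancel (ne_of_gt hy0)
  have hKa : y < K a := by
    refine lt_trans ?_ (K_gt ha)
    rw [lt_div_iff₀ (by positivity)]
    nlinarith
  obtain ⟨b, hb_def⟩ : ∃ b, b = Real.sqrt (1 / y) + 1 := ⟨_, rfl⟩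
  have hb : 0 < b := by rw [hb_def]; positivity
  have hbs : Real.sqrt (1 / y) ^ 2 = 1 / y := Real.sq_sqrt (by positivity)
  have hb2 : 1 / y < b ^ 2 := by
    have h0 : 0 ≤ Real.sqrt (1 / y) := Real.sqrt_nonneg _
    rw [hb_def]
    nlinarith
  have hKb : K b < y := by
    refine lt_trans (K_lt_inv_sq hb) ?_
    rw [div_lt_iff₀ (by positivity)]
    have h3 : y * (1 / y) < y * b ^ 2 := mul_lt_mul_of_pos_left hb2 hy0
    linarith
  have hab : a < b := by
    by_contra h
    push_neg at h
    rcases eq_or_lt_of_le h with heq | hlt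
    · rw [heq] at hKb; linarith
    · have := K_anti hb ha hlt
      linarith
  have hsub : Set.Icc (K b) (K a) ⊆ K '' Set.Icc a b :=
    intermediate_value_Icc' hab.le (contK.mono (fun t ht => lt_of_lt_of_le ha ht.1))
  obtain ⟨x, hx, hxy⟩ := hsub ⟨hKb.le, hKa.le⟩
  exact ⟨x, lt_of_lt_of_le ha hx.1, hxy⟩
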